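/- Comparison of group and population mean imputations' fairness gaps (Theorem 3): under the assumptions Var(X | {O=0} ∩ G) = Var(X | {O=0} ∩ Gᶜ) and μ_g^O > μ^O, both imputation strategies penalise the marginalised group and the reconstruction gap is larger for group imputation than for population imputation, i.e. Δ^{group}_g > Δ^{pop}_g > 0, if and only if either (F > R_F and E > R_E and H > R_H) or (F > R_F and E < R_E and H < R_H), where F = ρ_g·σ_{X|G}·f(α_g, r_g, α_{¬g}) + ρ_{¬g}·σ_{X|Gᶜ}·f(α_{¬g}, 1−r_g, α_g), R_F = ((1−r_g)·α_{¬g} − r_g·α_g)·(μ_g − μ_{¬g}), E = ρ_g·σ_{X|G}·e(α_g) − ρ_{¬g}·σ_{X|Gᶜ}·e(α_{¬g}), R_E = μ_g − μ_{¬g}, H = ρ_g·σ_{X|G}·h(α_g, r_g, α_{¬g}) + ρ_{¬g}·σ_{X|Gᶜ}·h(α_{¬g}, 1−r_g, α_g), and R_H = ((1−r_g)·α_{¬g} − r_g·α_g)·(μ_g − μ_{¬g}). -/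

import Mathlib

set_option maxHeartbeats 1600000
set_option linter.unusedSectionVars false
open MeasureTheory ProbabilityTheory

section Helpers
variable {Ω : Type*} [MeasurableSpace Ω] {μ : Measure Ω} {O X : Ω → ℝ}

lemma my_integral_cond (μ : Measure Ω) (s : Set Ω) (f : Ω → ℝ) :
    ∫ ω, f ω ∂(μ[|s]) = (μ s).toReal⁻¹ * (∫ ω in s, f ω ∂μ) := by
  rw [ProbabilityTheory.cond, integral_smul_measure, ENNReal.toReal_inv, smul_eq_mul]

lemma my_memLp_cond (hX2 : MeasureTheory.MemLp X 2 μ) (s : Set Ω) (hs : μ s ≠ 0) :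
    MeasureTheory.MemLp X 2 (μ[|s]) := by
  rw [ProbabilityTheory.cond]
  exact (hX2.restrict s).smul_measure (ENNReal.inv_ne_top.mpr hs)

lemma O_eq_indicator (hO01 : ∀ ω, O ω = 0 ∨ O ω = 1) :
    O = (O ⁻¹' {1}).indicator (fun _ => (1:ℝ)) := by
  funext ω; rcases hO01 ω with h | h <;>
    simp [Set.indicator_apply, Set.mem_preimage, h]

lemma OX_eq_indicator (hO01 : ∀ ω, O ω = 0 ∨ O ω = 1) (X : Ω → ℝ) :
    (fun ω => O ω * X ω) = (O ⁻¹' {1}).indicator X := by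
  funext ω; rcases hO01 ω with h | h <;>
    simp [Set.indicator_apply, Set.mem_preimage, h]

lemma setIntegral_O (hO01 : ∀ ω, O ω = 0 ∨ O ω = 1) (hOm : Measurable O) (s : Set Ω) :
    ∫ ω in s, O ω ∂μ = (μ (O ⁻¹' {1} ∩ s)).toReal := by
  have hs1 : MeasurableSet (O ⁻¹' {1}) := hOm (measurableSet_singleton 1)
  calc ∫ ω in s, O ω ∂μ = ∫ ω in s, (O ⁻¹' {1}).indicator (fun _ => (1:ℝ)) ω ∂μ :=
        integral_congr_ae (Filter.Eventually.of_forall fun ω =>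
          congrFun (O_eq_indicator hO01) ω)
    _ = (μ (O ⁻¹' {1} ∩ s)).toReal := by
        rw [integral_indicator hs1, Measure.restrict_restrict hs1, setIntegral_const,
          smul_eq_mul, mul_one]
        rfl

lemma setIntegral_OX (hO01 : ∀ ω, O ω = 0 ∨ O ω = 1) (hOm : Measurable O) (X : Ω → ℝ)
    (s : Set Ω) :
    ∫ ω in s, O ω * X ω ∂μ = ∫ ω in O ⁻¹' {1} ∩ s, X ω ∂μ := by
  have hs1 : MeasurableSet (O ⁻¹' {1}) := hOm (measurableSet_singleton 1)
  calc ∫ ω in s, O ω * X ω ∂μ = ∫ ω in s, (O ⁻¹' {1}).indicator X ω ∂μ :=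
        integral_congr_ae (Filter.Eventually.of_forall fun ω =>
          congrFun (OX_eq_indicator hO01 X) ω)
    _ = ∫ ω in O ⁻¹' {1} ∩ s, X ω ∂μ := by
        rw [integral_indicator hs1, Measure.restrict_restrict hs1]

lemma sqrt_red (a c u w : ℝ) (ha0 : 0 < a) (ha1 : a < 1) :
    c / Real.sqrt (a*(1-a)) * (u / Real.sqrt (a*(1-a)) - Real.sqrt ((1-a)/a) * w)
      = c*u/(a*(1-a)) - c*w/a := by
  have h1a : (0:ℝ) < 1 - a := by linarith
  have sa : Real.sqrt a * Real.sqrt a = a := Real.mul_self_sqrt ha0.le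
  have s1a : Real.sqrt (1-a) * Real.sqrt (1-a) = 1 - a := Real.mul_self_sqrt h1a.le
  have key : ∀ A B : ℝ, 0 < A → 0 < B →
      c/(A*B) * (u/(A*B) - (B/A)*w) = c*u/((A*A)*(B*B)) - c*w/(A*A) := by
    intro A B hA hB; field_simp
  rw [Real.sqrt_mul ha0.le, Real.sqrt_div h1a.le]
  have := key (Real.sqrt a) (Real.sqrt (1-a)) (Real.sqrt_pos.mpr ha0) (Real.sqrt_pos.mpr h1a)
  rwa [sa, s1a] at this

lemma sqrt_red_e (a c : ℝ) (ha0 : 0 < a) (ha1 : a < 1) :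
    c / Real.sqrt (a*(1-a)) * Real.sqrt (a/(1-a)) = c/(1-a) := by
  have h1a : (0:ℝ) < 1 - a := by linarith
  have sa : Real.sqrt a * Real.sqrt a = a := Real.mul_self_sqrt ha0.le
  have s1a : Real.sqrt (1-a) * Real.sqrt (1-a) = 1 - a := Real.mul_self_sqrt h1a.le
  have key : ∀ A B : ℝ, 0 < A → 0 < B → c/(A*B) * (A/B) = c/(B*B) := by
    intro A B hA hB; field_simp
  rw [Real.sqrt_mul ha0.le, Real.sqrt_div ha0.le]
  have := key (Real.sqrt a) (Real.sqrt (1-a)) (Real.sqrt_pos.mpr ha0) (Real.sqrt_pos.mpr h1a)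
  rwa [s1a] at this

end Helpers

/-- Covariance of two real random variables under the measure `μ`. -/
noncomputable def condCov {Ω : Type*} [MeasurableSpace Ω] (μ : Measure Ω) (O X : Ω → ℝ) : ℝ :=
  ∫ ω, (O ω - ∫ x, O x ∂μ) * (X ω - ∫ x, X x ∂μ) ∂μ

section Helpers2
variable {Ω : Type*} [MeasurableSpace Ω] {O X : Ω → ℝ}

lemma condCov_eq (ν : Measure Ω) [IsProbabilityMeasure ν]
    (hO : Integrable O ν) (hX : Integrable X ν)
    (hOX : Integrable (fun ω => O ω * X ω) ν) :
    condCov ν O X = (∫ ω, O ω * X ω ∂ν) - (∫ ω, O ω ∂ν) * (∫ ω, X ω ∂ν) := by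
  set a := ∫ ω, O ω ∂ν with ha
  set b := ∫ ω, X ω ∂ν with hb
  have hpt : ∀ ω, (O ω - a) * (X ω - b) = O ω * X ω - a * X ω - b * O ω + a * b := by
    intro ω; ring
  have iX : Integrable (fun ω => a * X ω) ν := hX.const_mul a
  have iO : Integrable (fun ω => b * O ω) ν := hO.const_mul b
  have iA : Integrable (fun ω => O ω * X ω - a * X ω) ν := hOX.sub iX
  have iB : Integrable (fun ω => O ω * X ω - a * X ω - b * O ω) ν := iA.sub iO
  rw [condCov, ← ha, ← hb]
  simp_rw [hpt]
  rw [integral_add iB (integrable_const _), integral_sub iA iO, integral_sub hOX iX,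
    integral_const_mul, integral_const_mul, integral_const]
  simp; ring

lemma L_expand (ν : Measure Ω) [IsProbabilityMeasure ν] (hX : MeasureTheory.MemLp X 2 ν)
    (c : ℝ) :
    ∫ ω, (c - X ω) ^ 2 ∂ν = variance X ν + (c - ∫ ω, X ω ∂ν) ^ 2 := by
  have i1 : Integrable (fun ω => X ω ^ 2) ν := by
    have := hX.integrable_sq
    simpa [pow_two] using this
  have i2 : Integrable X ν := hX.integrable one_le_two
  have i3 : Integrable (fun ω => 2 * c * X ω) ν := i2.const_mul _
  have i4 : Integrable (fun ω => X ω ^ 2 - 2 * c * X ω) ν := i1.sub i3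
  have hpt : ∀ ω, (c - X ω) ^ 2 = X ω ^ 2 - 2 * c * X ω + c ^ 2 := by intro ω; ring
  simp_rw [hpt]
  rw [integral_add i4 (integrable_const _), integral_sub i1 i3, integral_const_mul,
    integral_const, variance_eq_sub hX]
  have : ∫ ω, (X ^ 2) ω ∂ν = ∫ ω, X ω ^ 2 ∂ν := by simp [pow_two]
  rw [this]
  simp; ring

end Helpers2

lemma aux_key (a b r Mg Mn Ng Nn v cg cn mg mn mO s d F RF E RE H RH DG DP : ℝ)
    (ha0 : 0 < a) (ha1 : a < 1) (hb0 : 0 < b) (hb1 : b < 1) (hr0 : 0 < r) (hr1 : r < 1)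
    (hs : s = r * a + (1 - r) * b)
    (hcg : cg = a * (1 - a) * (Mg - Ng)) (hcn : cn = b * (1 - b) * (Mn - Nn))
    (hmg : mg = a * Mg + (1 - a) * Ng) (hmn : mn = b * Mn + (1 - b) * Nn)
    (hmO : mO = (r * a * Mg + (1 - r) * b * Mn) / s)
    (hd : d = b * (1 - r) - a * r)
    (hF : F = (cg * (2 * b * (1 - r)) / (a * (1 - a)) - cg * (b * (1 - r) - a * r) / a)
            + (cn * (2 * a * r) / (b * (1 - b)) - cn * (a * r - b * (1 - r)) / b))
    (hRF : RF = d * (mg - mn))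
    (hE : E = cg / (1 - a) - cn / (1 - b))
    (hRE : RE = mg - mn)
    (hH : H = (cg * (a * r + b * (1 - r)) / (a * (1 - a)) - cg * (b * (1 - r) - a * r) / a)
            + (cn * (b * (1 - r) + a * r) / (b * (1 - b)) - cn * (a * r - b * (1 - r)) / b))
    (hRH : RH = d * (mg - mn))
    (hDG : DG = (v + (Mg - Ng) ^ 2) - (v + (Mn - Nn) ^ 2))
    (hDP : DP = (v + (mO - Ng) ^ 2) - (v + (mO - Nn) ^ 2))
    (hmean : Mg > mO) :
    (DG > DP ∧ DP > 0) ↔ (F > RF ∧ E > RE ∧ H > RH) ∨ (F > RF ∧ E < RE ∧ H < RH) := by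
  have hspos : 0 < s := by rw [hs]; nlinarith
  have hsne : s ≠ 0 := ne_of_gt hspos
  have ha1' : (0:ℝ) < 1 - a := by linarith
  have hb1' : (0:ℝ) < 1 - b := by linarith
  have hr1' : (0:ℝ) < 1 - r := by linarith
  have hane : a ≠ 0 := ne_of_gt ha0
  have hbne : b ≠ 0 := ne_of_gt hb0
  have ha1ne : (1:ℝ) - a ≠ 0 := ne_of_gt ha1'
  have hb1ne : (1:ℝ) - b ≠ 0 := ne_of_gt hb1'
  have hF' : F = 2*b*(1-r)*(Mg-Ng) - (1-a)*(Mg-Ng)*(b*(1-r)-a*r)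
      + (2*a*r*(Mn-Nn) - (1-b)*(Mn-Nn)*(a*r-b*(1-r))) := by
    rw [hF, hcg, hcn]; field_simp
  have hE' : E = a*(Mg-Ng) - b*(Mn-Nn) := by
    rw [hE, hcg, hcn]; field_simp
  have hH' : H = (a*r+b*(1-r))*(Mg-Ng) - (1-a)*(Mg-Ng)*(b*(1-r)-a*r)
      + ((b*(1-r)+a*r)*(Mn-Nn) - (1-b)*(Mn-Nn)*(a*r-b*(1-r))) := by
    rw [hH, hcg, hcn]; field_simp
  have hDpos : 0 < Mg - Mn := by
    have h1 : Mg - mO = (1 - r) * b / s * (Mg - Mn) := by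
      rw [hmO, hs]; field_simp; ring
    have h3 : 0 < (1 - r) * b / s := by positivity
    by_contra hc
    push_neg at hc
    nlinarith [mul_nonneg h3.le (by linarith : (0:ℝ) ≤ Mn - Mg)]
  have id1 : DG - DP = ((Mg - Mn) / s) * (F - RF) := by
    rw [hDG, hDP, hF', hRF, hmg, hmn, hmO, hd, hs]
    field_simp
    ring
  have id2 : DP * s = (E - RE) * (H - RH) := by
    rw [hDP, hE', hRE, hH', hRH, hmg, hmn, hmO, hd, hs]
    field_simp
    ring
  have hk : 0 < (Mg - Mn) / s := div_pos hDpos hspos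
  have P1 : DG > DP ↔ F > RF := by
    constructor
    · intro hgt
      by_contra hc
      push_neg at hc
      nlinarith [id1, mul_nonneg hk.le (by linarith : (0:ℝ) ≤ RF - F)]
    · intro hgt
      nlinarith [id1, mul_pos hk (by linarith : (0:ℝ) < F - RF)]
  have P2 : DP > 0 ↔ (E - RE) * (H - RH) > 0 := by
    constructor
    · intro hgt; nlinarith [id2]
    · intro hgt
      by_contra hc
      push_neg at hc
      nlinarith [id2, mul_nonneg (by linarith : (0:ℝ) ≤ -DP) hspos.le]
  have hmp : (E - RE) * (H - RH) > 0 ↔ (0 < E - RE ∧ 0 < H - RH) ∨ (E - RE < 0 ∧ H - RH < 0) :=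
    mul_pos_iff
  rw [P1, P2, hmp]
  constructor
  · rintro ⟨hf', h1 | h2⟩
    · exact Or.inl ⟨hf', by linarith [h1.1], by linarith [h1.2]⟩
    · exact Or.inr ⟨hf', by linarith [h2.1], by linarith [h2.2]⟩
  · rintro (⟨hf', h1, h2⟩ | ⟨hf', h1, h2⟩)
    · exact ⟨hf', Or.inl ⟨by linarith, by linarith⟩⟩
    · exact ⟨hf', Or.inr ⟨by linarith, by linarith⟩⟩
/-- (Theorem 3.) Under equal unobserved-data variances and `μ_g^O > μ^O`,
`Δ^group_g > Δ^pop_g > 0` iff either `(F > R_F ∧ E > R_E ∧ H > R_H)` or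
`(F > R_F ∧ E < R_E ∧ H < R_H)`. -/
theorem fairness_gap_comparison
    {Ω : Type*} [MeasurableSpace Ω] (μ : Measure Ω) [IsProbabilityMeasure μ]
    (X O : Ω → ℝ) (G : Set Ω)
    (hXm : Measurable X) (hOm : Measurable O) (hG : MeasurableSet G)
    (hX2 : MemLp X 2 μ)
    (hO01 : ∀ ω, O ω = 0 ∨ O ω = 1)
    (αg αng μg μng μgO μngO μO σXG σXnG ρg ρng rg
      LgGroup LngGroup LgPop LngPop ΔGroup ΔPop F RF E RE H RH : ℝ)
    (f : ℝ → ℝ → ℝ → ℝ) (e : ℝ → ℝ) (h : ℝ → ℝ → ℝ → ℝ)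
    (hαg : αg = ∫ ω, O ω ∂(μ[|G]))
    (hαng : αng = ∫ ω, O ω ∂(μ[|Gᶜ]))
    (hμg : μg = ∫ ω, X ω ∂(μ[|G]))
    (hμng : μng = ∫ ω, X ω ∂(μ[|Gᶜ]))
    (hμgO : μgO = ∫ ω, X ω ∂(μ[|O ⁻¹' {1} ∩ G]))
    (hμngO : μngO = ∫ ω, X ω ∂(μ[|O ⁻¹' {1} ∩ Gᶜ]))
    (hμO : μO = ∫ ω, X ω ∂(μ[|O ⁻¹' {1}]))
    (hσXG : σXG = Real.sqrt (variance X (μ[|G])))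
    (hσXnG : σXnG = Real.sqrt (variance X (μ[|Gᶜ])))
    (hρg : ρg = condCov (μ[|G]) O X / (Real.sqrt (αg * (1 - αg)) * σXG))
    (hρng : ρng = condCov (μ[|Gᶜ]) O X / (Real.sqrt (αng * (1 - αng)) * σXnG))
    (hrg : rg = (μ G).toReal)
    (hLgGroup : LgGroup = ∫ ω, (μgO - X ω) ^ 2 ∂(μ[|O ⁻¹' {0} ∩ G]))
    (hLngGroup : LngGroup = ∫ ω, (μngO - X ω) ^ 2 ∂(μ[|O ⁻¹' {0} ∩ Gᶜ]))
    (hLgPop : LgPop = ∫ ω, (μO - X ω) ^ 2 ∂(μ[|O ⁻¹' {0} ∩ G]))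
    (hLngPop : LngPop = ∫ ω, (μO - X ω) ^ 2 ∂(μ[|O ⁻¹' {0} ∩ Gᶜ]))
    (hΔGroup : ΔGroup = LgGroup - LngGroup)
    (hΔPop : ΔPop = LgPop - LngPop)
    (hf : ∀ a r b, f a r b =
      2 * b * (1 - r) / Real.sqrt (a * (1 - a)) -
        Real.sqrt ((1 - a) / a) * (b * (1 - r) - a * r))
    (he : ∀ a, e a = Real.sqrt (a / (1 - a)))
    (hh : ∀ a r b, h a r b =
      (a * r + b * (1 - r)) / Real.sqrt (a * (1 - a)) -
        Real.sqrt ((1 - a) / a) * (b * (1 - r) - a * r))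
    (hF : F = ρg * σXG * f αg rg αng + ρng * σXnG * f αng (1 - rg) αg)
    (hRF : RF = ((1 - rg) * αng - rg * αg) * (μg - μng))
    (hE : E = ρg * σXG * e αg - ρng * σXnG * e αng)
    (hRE : RE = μg - μng)
    (hH : H = ρg * σXG * h αg rg αng + ρng * σXnG * h αng (1 - rg) αg)
    (hRH : RH = ((1 - rg) * αng - rg * αg) * (μg - μng))
    (hr0 : 0 < rg) (hr1 : rg < 1)
    (hαg0 : 0 < αg) (hαg1 : αg < 1)
    (hαng0 : 0 < αng) (hαng1 : αng < 1)
    (hσpos : 0 < σXG) (hσnpos : 0 < σXnG)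
    (hpos1g : 0 < μ (O ⁻¹' {1} ∩ G)) (hpos0g : 0 < μ (O ⁻¹' {0} ∩ G))
    (hpos1ng : 0 < μ (O ⁻¹' {1} ∩ Gᶜ)) (hpos0ng : 0 < μ (O ⁻¹' {0} ∩ Gᶜ))
    (hvar : variance X (μ[|O ⁻¹' {0} ∩ G]) = variance X (μ[|O ⁻¹' {0} ∩ Gᶜ]))
    (hmean : μgO > μO) :
    (ΔGroup > ΔPop ∧ ΔPop > 0) ↔
      (F > RF ∧ E > RE ∧ H > RH) ∨ (F > RF ∧ E < RE ∧ H < RH) := by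
  -- measurability
  have hs1 : MeasurableSet (O ⁻¹' {1}) := hOm (measurableSet_singleton 1)
  have hs0 : MeasurableSet (O ⁻¹' {0}) := hOm (measurableSet_singleton 0)
  have hGc : MeasurableSet Gᶜ := hG.compl
  -- scalar abbreviations
  set p1g := (μ (O ⁻¹' {1} ∩ G)).toReal with hp1g_def
  set p0g := (μ (O ⁻¹' {0} ∩ G)).toReal with hp0g_def
  set p1n := (μ (O ⁻¹' {1} ∩ Gᶜ)).toReal with hp1n_def
  set p0n := (μ (O ⁻¹' {0} ∩ Gᶜ)).toReal with hp0n_def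
  set I1g := ∫ ω in O ⁻¹' {1} ∩ G, X ω ∂μ with hI1g_def
  set I0g := ∫ ω in O ⁻¹' {0} ∩ G, X ω ∂μ with hI0g_def
  set I1n := ∫ ω in O ⁻¹' {1} ∩ Gᶜ, X ω ∂μ with hI1n_def
  set I0n := ∫ ω in O ⁻¹' {0} ∩ Gᶜ, X ω ∂μ with hI0n_def
  have hp1g : 0 < p1g := ENNReal.toReal_pos hpos1g.ne' (measure_ne_top μ _)
  have hp0g : 0 < p0g := ENNReal.toReal_pos hpos0g.ne' (measure_ne_top μ _)
  have hp1n : 0 < p1n := ENNReal.toReal_pos hpos1ng.ne' (measure_ne_top μ _)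
  have hp0n : 0 < p0n := ENNReal.toReal_pos hpos0ng.ne' (measure_ne_top μ _)
  -- μ G ≠ 0 and μ Gᶜ ≠ 0
  have hGne : μ G ≠ 0 := by
    intro h0
    rw [hrg, h0] at hr0
    simp at hr0
  have hcompl : (μ G).toReal + (μ Gᶜ).toReal = 1 := by
    rw [← ENNReal.toReal_add (measure_ne_top μ G) (measure_ne_top μ Gᶜ),
      measure_add_measure_compl hG, measure_univ, ENNReal.toReal_one]
  have hGc1 : (μ Gᶜ).toReal = 1 - rg := by rw [hrg]; linarith
  have hGcne : μ Gᶜ ≠ 0 := by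
    intro h0
    rw [h0] at hGc1
    simp at hGc1
    linarith
  -- partitions
  have hsplit : ∀ s : Set Ω, s = (O ⁻¹' {1} ∩ s) ∪ (O ⁻¹' {0} ∩ s) := by
    intro s; ext ω; rcases hO01 ω with h | h <;> simp [h]
  have hdisj : ∀ s : Set Ω, Disjoint (O ⁻¹' {1} ∩ s) (O ⁻¹' {0} ∩ s) := by
    intro s
    rw [Set.disjoint_left]
    rintro ω ⟨h1, -⟩ ⟨h0, -⟩
    simp only [Set.mem_preimage, Set.mem_singleton_iff] at h1 h0
    rw [h0] at h1; norm_num at h1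
  have hXint : Integrable X μ := hX2.integrable one_le_two
  have hmeas_split : ∀ s : Set Ω, MeasurableSet s →
      (μ s).toReal = (μ (O ⁻¹' {1} ∩ s)).toReal + (μ (O ⁻¹' {0} ∩ s)).toReal := by
    intro s hs
    rw [← ENNReal.toReal_add (measure_ne_top μ _) (measure_ne_top μ _)]
    congr 1
    conv_lhs => rw [hsplit s]
    exact measure_union (hdisj s) (hs0.inter hs)
  have hint_split : ∀ s : Set Ω, MeasurableSet s →
      ∫ ω in s, X ω ∂μ = (∫ ω in O ⁻¹' {1} ∩ s, X ω ∂μ) + ∫ ω in O ⁻¹' {0} ∩ s, X ω ∂μ := by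
    intro s hs
    conv_lhs => rw [hsplit s]
    exact setIntegral_union (hdisj s) (hs0.inter hs) hXint.integrableOn hXint.integrableOn
  have hrgsum : rg = p1g + p0g := by rw [hrg, hmeas_split G hG]
  have h1rgsum : 1 - rg = p1n + p0n := by rw [← hGc1, hmeas_split Gᶜ hGc]
  -- partition of O=1 by G
  have hsplitG : O ⁻¹' {1} = (O ⁻¹' {1} ∩ G) ∪ (O ⁻¹' {1} ∩ Gᶜ) :=
    (Set.inter_union_compl _ _).symm
  have hdisjG : Disjoint (O ⁻¹' {1} ∩ G) (O ⁻¹' {1} ∩ Gᶜ) :=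
    disjoint_compl_right.mono Set.inter_subset_right Set.inter_subset_right
  have hm1 : (μ (O ⁻¹' {1})).toReal = p1g + p1n := by
    rw [← ENNReal.toReal_add (measure_ne_top μ _) (measure_ne_top μ _)]
    congr 1
    conv_lhs => rw [hsplitG]
    exact measure_union hdisjG (hs1.inter hGc)
  have hi1 : ∫ ω in O ⁻¹' {1}, X ω ∂μ = I1g + I1n := by
    conv_lhs => rw [hsplitG]
    exact setIntegral_union hdisjG (hs1.inter hGc) hXint.integrableOn hXint.integrableOn
  -- express conditional quantities
  have hαg' : αg = rg⁻¹ * p1g := by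
    rw [hαg, my_integral_cond μ G O, setIntegral_O hO01 hOm, ← hrg, ← hp1g_def]
  have hαng' : αng = (1 - rg)⁻¹ * p1n := by
    rw [hαng, my_integral_cond μ Gᶜ O, setIntegral_O hO01 hOm, hGc1, ← hp1n_def]
  have hμg' : μg = rg⁻¹ * (I1g + I0g) := by
    rw [hμg, my_integral_cond μ G X, hint_split G hG, ← hrg]
  have hμng' : μng = (1 - rg)⁻¹ * (I1n + I0n) := by
    rw [hμng, my_integral_cond μ Gᶜ X, hint_split Gᶜ hGc, hGc1]
  have hμgO' : μgO = p1g⁻¹ * I1g := by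
    rw [hμgO, my_integral_cond μ _ X]
  have hμngO' : μngO = p1n⁻¹ * I1n := by
    rw [hμngO, my_integral_cond μ _ X]
  have hμO' : μO = (p1g + p1n)⁻¹ * (I1g + I1n) := by
    rw [hμO, my_integral_cond μ _ X, hm1, hi1]
  -- conditional means on unobserved parts
  set Ng := ∫ ω, X ω ∂(μ[|O ⁻¹' {0} ∩ G]) with hNg_def
  set Nn := ∫ ω, X ω ∂(μ[|O ⁻¹' {0} ∩ Gᶜ]) with hNn_def
  have hNg' : Ng = p0g⁻¹ * I0g := by rw [hNg_def, my_integral_cond μ _ X]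
  have hNn' : Nn = p0n⁻¹ * I0n := by rw [hNn_def, my_integral_cond μ _ X]
  -- probability measure instances
  haveI pG : IsProbabilityMeasure (μ[|G]) := cond_isProbabilityMeasure hGne
  haveI pGc : IsProbabilityMeasure (μ[|Gᶜ]) := cond_isProbabilityMeasure hGcne
  haveI p0G : IsProbabilityMeasure (μ[|O ⁻¹' {0} ∩ G]) :=
    cond_isProbabilityMeasure hpos0g.ne'
  haveI p0Gc : IsProbabilityMeasure (μ[|O ⁻¹' {0} ∩ Gᶜ]) :=
    cond_isProbabilityMeasure hpos0ng.ne'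
  -- covariances
  have intX_G : Integrable X (μ[|G]) := (my_memLp_cond hX2 G hGne).integrable one_le_two
  have intO_G : Integrable O (μ[|G]) := by
    rw [O_eq_indicator hO01]
    exact (integrable_const (1:ℝ)).indicator hs1
  have intOX_G : Integrable (fun ω => O ω * X ω) (μ[|G]) := by
    rw [OX_eq_indicator hO01 X]
    exact intX_G.indicator hs1
  have intX_Gc : Integrable X (μ[|Gᶜ]) := (my_memLp_cond hX2 Gᶜ hGcne).integrable one_le_two
  have intO_Gc : Integrable O (μ[|Gᶜ]) := by
    rw [O_eq_indicator hO01]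
    exact (integrable_const (1:ℝ)).indicator hs1
  have intOX_Gc : Integrable (fun ω => O ω * X ω) (μ[|Gᶜ]) := by
    rw [OX_eq_indicator hO01 X]
    exact intX_Gc.indicator hs1
  set cgv := condCov (μ[|G]) O X with hcgv_def
  set cnv := condCov (μ[|Gᶜ]) O X with hcnv_def
  have hcovG : cgv = rg⁻¹ * I1g - αg * μg := by
    rw [hcgv_def, condCov_eq _ intO_G intX_G intOX_G, ← hαg, ← hμg,
      my_integral_cond μ G (fun ω => O ω * X ω), setIntegral_OX hO01 hOm X G, ← hrg, ← hI1g_def]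
  have hcovGc : cnv = (1 - rg)⁻¹ * I1n - αng * μng := by
    rw [hcnv_def, condCov_eq _ intO_Gc intX_Gc intOX_Gc, ← hαng, ← hμng,
      my_integral_cond μ Gᶜ (fun ω => O ω * X ω), setIntegral_OX hO01 hOm X Gᶜ, hGc1,
      ← hI1n_def]
  -- ρ·σ reductions
  have hsqg : Real.sqrt (αg * (1 - αg)) ≠ 0 :=
    ne_of_gt (Real.sqrt_pos.mpr (mul_pos hαg0 (by linarith)))
  have hsqn : Real.sqrt (αng * (1 - αng)) ≠ 0 :=
    ne_of_gt (Real.sqrt_pos.mpr (mul_pos hαng0 (by linarith)))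
  have hkg : ρg * σXG = cgv / Real.sqrt (αg * (1 - αg)) := by
    rw [hρg, div_mul_eq_mul_div, mul_div_mul_right _ _ hσpos.ne']
  have hkn : ρng * σXnG = cnv / Real.sqrt (αng * (1 - αng)) := by
    rw [hρng, div_mul_eq_mul_div, mul_div_mul_right _ _ hσnpos.ne']
  -- sqrt-free forms of F, E, H
  have hFa : F = (cgv * (2 * αng * (1 - rg)) / (αg * (1 - αg))
        - cgv * (αng * (1 - rg) - αg * rg) / αg)
      + (cnv * (2 * αg * rg) / (αng * (1 - αng))
        - cnv * (αg * rg - αng * (1 - rg)) / αng) := by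
    rw [hF, hkg, hkn, hf, hf, sqrt_red _ _ _ _ hαg0 hαg1, sqrt_red _ _ _ _ hαng0 hαng1]
    ring
  have hEa : E = cgv / (1 - αg) - cnv / (1 - αng) := by
    rw [hE, hkg, hkn, he, he, sqrt_red_e _ _ hαg0 hαg1, sqrt_red_e _ _ hαng0 hαng1]
  have hHa : H = (cgv * (αg * rg + αng * (1 - rg)) / (αg * (1 - αg))
        - cgv * (αng * (1 - rg) - αg * rg) / αg)
      + (cnv * (αng * (1 - rg) + αg * rg) / (αng * (1 - αng))
        - cnv * (αg * rg - αng * (1 - rg)) / αng) := by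
    rw [hH, hkg, hkn, hh, hh, sqrt_red _ _ _ _ hαg0 hαg1, sqrt_red _ _ _ _ hαng0 hαng1]
    ring
  -- L decompositions
  set vv := variance X (μ[|O ⁻¹' {0} ∩ G]) with hvv_def
  have hLgG : LgGroup = vv + (μgO - Ng) ^ 2 := by
    rw [hLgGroup, L_expand _ (my_memLp_cond hX2 _ hpos0g.ne') μgO, ← hNg_def, ← hvv_def]
  have hLnG : LngGroup = vv + (μngO - Nn) ^ 2 := by
    rw [hLngGroup, L_expand _ (my_memLp_cond hX2 _ hpos0ng.ne') μngO, ← hNn_def, ← hvar]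
  have hLgP : LgPop = vv + (μO - Ng) ^ 2 := by
    rw [hLgPop, L_expand _ (my_memLp_cond hX2 _ hpos0g.ne') μO, ← hNg_def, ← hvv_def]
  have hLnP : LngPop = vv + (μO - Nn) ^ 2 := by
    rw [hLngPop, L_expand _ (my_memLp_cond hX2 _ hpos0ng.ne') μO, ← hNn_def, ← hvar]
  -- nonzero facts for field_simp
  have hrne : rg ≠ 0 := ne_of_gt hr0
  have h1rne : (1:ℝ) - rg ≠ 0 := by linarith
  have hp1gne : p1g ≠ 0 := ne_of_gt hp1g
  have hp0gne : p0g ≠ 0 := ne_of_gt hp0g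
  have hp1nne : p1n ≠ 0 := ne_of_gt hp1n
  have hp0nne : p0n ≠ 0 := ne_of_gt hp0n
  have hp11ne : p1g + p1n ≠ 0 := by positivity
  -- bridge identities (all scalar algebra now)
  have hcga : cgv = αg * (1 - αg) * (μgO - Ng) := by
    rw [hcovG, hαg', hμg', hμgO', hNg', hrgsum]
    have hsum : p1g + p0g ≠ 0 := by positivity
    field_simp
    ring
  have hcna : cnv = αng * (1 - αng) * (μngO - Nn) := by
    rw [hcovGc, hαng', hμng', hμngO', hNn', h1rgsum]
    have hsum : p1n + p0n ≠ 0 := by positivity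
    field_simp
    ring
  have hmga : μg = αg * μgO + (1 - αg) * Ng := by
    rw [hμg', hαg', hμgO', hNg', hrgsum]
    have hsum : p1g + p0g ≠ 0 := by positivity
    field_simp
    ring
  have hmna : μng = αng * μngO + (1 - αng) * Nn := by
    rw [hμng', hαng', hμngO', hNn', h1rgsum]
    have hsum : p1n + p0n ≠ 0 := by positivity
    field_simp
    ring
  have hp1geq : rg * αg = p1g := by
    rw [hαg']
    field_simp
  have hp1neq : (1 - rg) * αng = p1n := by
    rw [hαng']
    field_simp
  have hmOa : μO = (rg * αg * μgO + (1 - rg) * αng * μngO) / (rg * αg + (1 - rg) * αng) := by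
    rw [hμO', hμgO', hμngO', hp1geq, hp1neq]
    field_simp
  -- apply the key algebraic lemma
  exact aux_key αg αng rg μgO μngO Ng Nn vv cgv cnv μg μng μO
    (rg * αg + (1 - rg) * αng) (αng * (1 - rg) - αg * rg) F RF E RE H RH ΔGroup ΔPop
    hαg0 hαg1 hαng0 hαng1 hr0 hr1 rfl hcga hcna hmga hmna hmOa rfl
    hFa (by rw [hRF]; ring) hEa hRE hHa (by rw [hRH]; ring)
    (by rw [hΔGroup, hLgG, hLnG]) (by rw [hΔPop, hLgP, hLnP]) hmean
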